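/- The complement in X_S of the images of the two fixed points (0, 0, 0, ±1) of ι, with the subspace topology, is homeomorphic to ℝP² × ℝ. -/

import Mathlib

/-- The unit 3-sphere in `EuclideanSpace ℝ (Fin 4)`. -/
abbrev S3 : Type := ↥(Metric.sphere (0 : EuclideanSpace ℝ (Fin 4)) 1)

/-- The involution `ι(x₁, x₂, x₃, x₄) = (−x₁, −x₂, −x₃, x₄)` on the unit 3-sphere. -/
noncomputable def sphereInv (x : S3) : S3 :=
  ⟨(WithLp.toLp 2 (fun i => if i = 3 then (x : EuclideanSpace ℝ (Fin 4)) i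
      else -(x : EuclideanSpace ℝ (Fin 4)) i) : EuclideanSpace ℝ (Fin 4)), by
    have hx := x.2
    rw [mem_sphere_zero_iff_norm] at hx ⊢
    rw [EuclideanSpace.norm_eq] at hx ⊢
    simpa [apply_ite (‖·‖)] using hx⟩

/-- The quotient space `X_S = S³ / ι`, i.e. the quotient of the 3-sphere by the
equivalence relation identifying each point `p` with `ι p`, with the quotient topology. -/
abbrev XS : Type := Quot (fun p q : S3 => sphereInv p = q)

/-- The fixed point `(0, 0, 0, 1)` of `ι` on the 3-sphere. -/
noncomputable def northS3 : S3 :=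
  ⟨EuclideanSpace.single 3 (1 : ℝ), by simp⟩

/-- The fixed point `(0, 0, 0, −1)` of `ι` on the 3-sphere. -/
noncomputable def southS3 : S3 :=
  ⟨EuclideanSpace.single 3 (-1 : ℝ), by simp⟩

/-- The unit 2-sphere in `EuclideanSpace ℝ (Fin 3)`. -/
abbrev S2 : Type := ↥(Metric.sphere (0 : EuclideanSpace ℝ (Fin 3)) 1)

/-- The real projective plane: the quotient of the unit 2-sphere by the equivalence
relation identifying `x` with `−x`, with the quotient topology. -/
abbrev RP2 : Type :=
  Quot (fun x y : S2 => (y : EuclideanSpace ℝ (Fin 3)) = -(x : EuclideanSpace ℝ (Fin 3)))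

-- basic lemmas
lemma sphereInv_coe (x : S3) (i : Fin 4) :
    (sphereInv x : EuclideanSpace ℝ (Fin 4)) i
      = if i = 3 then (x : EuclideanSpace ℝ (Fin 4)) i else -(x : EuclideanSpace ℝ (Fin 4)) i := rfl

lemma sphereInv_inv (x : S3) : sphereInv (sphereInv x) = x := by
  apply Subtype.ext
  ext i
  simp only [sphereInv_coe]
  split <;> simp

lemma continuous_sphereInv : Continuous sphereInv := by
  apply Continuous.subtype_mk
  apply (PiLp.continuous_toLp 2 _).comp
  apply continuous_pi
  intro i
  by_cases h : i = 3
  · simp only [if_pos h]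
    exact (PiLp.continuous_apply 2 _ _).comp continuous_subtype_val
  · simp only [if_neg h]
    exact ((PiLp.continuous_apply 2 _ _).comp continuous_subtype_val).neg

lemma mkS3_eq {p q : S3} :
    (Quot.mk _ p : XS) = Quot.mk _ q ↔ p = q ∨ sphereInv p = q := by
  constructor
  · intro h
    have h' := Quot.eq.mp h
    clear h
    induction h' with
    | rel a b hab => exact Or.inr hab
    | refl a => exact Or.inl rfl
    | symm a b hab ih =>
        rcases ih with rfl | rfl
        · exact Or.inl rfl
        · exact Or.inr (sphereInv_inv a)
    | trans a b c hab hbc ih1 ih2 =>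
        rcases ih1 with rfl | rfl
        · exact ih2
        · rcases ih2 with rfl | h2
          · exact Or.inr rfl
          · exact Or.inl (by rw [← h2, sphereInv_inv])
  · rintro (rfl | h)
    · rfl
    · exact Quot.sound h

noncomputable def negS2 (x : S2) : S2 := ⟨-(x : EuclideanSpace ℝ (Fin 3)), by
  have := x.2; simp_all⟩

lemma mkS2_eq {p q : S2} :
    (Quot.mk _ p : RP2) = Quot.mk _ q ↔ p = q ∨ (q : EuclideanSpace ℝ (Fin 3)) = -(p : EuclideanSpace ℝ (Fin 3)) := by
  constructor
  · intro h
    have h' := Quot.eq.mp h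
    clear h
    induction h' with
    | rel a b hab => exact Or.inr hab
    | refl a => exact Or.inl rfl
    | symm a b hab ih =>
        rcases ih with rfl | h1
        · exact Or.inl rfl
        · exact Or.inr (by rw [h1, neg_neg])
    | trans a b c hab hbc ih1 ih2 =>
        rcases ih1 with rfl | h1
        · exact ih2
        · rcases ih2 with rfl | h2
          · exact Or.inr h1
          · exact Or.inl (Subtype.ext (by rw [h2, h1, neg_neg]))
  · rintro (rfl | h)
    · rfl
    · exact Quot.sound h

lemma sphereInv_north : sphereInv northS3 = northS3 := by
  apply Subtype.ext
  ext i
  simp only [sphereInv_coe, northS3, EuclideanSpace.single_apply]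
  split <;> simp_all

lemma sphereInv_south : sphereInv southS3 = southS3 := by
  apply Subtype.ext
  ext i
  simp only [sphereInv_coe, southS3, EuclideanSpace.single_apply]
  split <;> simp_all

lemma sum_sq_S3 (x : S3) :
    (x : EuclideanSpace ℝ (Fin 4)) 0 ^ 2 + (x : EuclideanSpace ℝ (Fin 4)) 1 ^ 2
      + (x : EuclideanSpace ℝ (Fin 4)) 2 ^ 2 + (x : EuclideanSpace ℝ (Fin 4)) 3 ^ 2 = 1 := by
  have hx := x.2
  rw [mem_sphere_zero_iff_norm, EuclideanSpace.norm_eq] at hx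
  have := Real.sqrt_eq_one.mp hx
  rw [Fin.sum_univ_four] at this
  simpa [Real.norm_eq_abs, sq_abs] using this

lemma sum_sq_S2 (u : S2) :
    (u : EuclideanSpace ℝ (Fin 3)) 0 ^ 2 + (u : EuclideanSpace ℝ (Fin 3)) 1 ^ 2
      + (u : EuclideanSpace ℝ (Fin 3)) 2 ^ 2 = 1 := by
  have hx := u.2
  rw [mem_sphere_zero_iff_norm, EuclideanSpace.norm_eq] at hx
  have := Real.sqrt_eq_one.mp hx
  rw [Fin.sum_univ_three] at this
  simpa [Real.norm_eq_abs, sq_abs] using this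

def Aset : Set S3 := {northS3, southS3}ᶜ

lemma isOpen_Aset : IsOpen Aset :=
  ((Set.finite_singleton southS3).insert northS3).isClosed.isOpen_compl

lemma mem_Aset_iff (x : S3) :
    x ∈ Aset ↔ 0 < (x : EuclideanSpace ℝ (Fin 4)) 0 ^ 2
      + (x : EuclideanSpace ℝ (Fin 4)) 1 ^ 2 + (x : EuclideanSpace ℝ (Fin 4)) 2 ^ 2 := by
  set v := (x : EuclideanSpace ℝ (Fin 4))
  constructor
  · intro hx
    by_contra hle
    push_neg at hle
    have h0 : v 0 ^ 2 + v 1 ^ 2 + v 2 ^ 2 = 0 := le_antisymm hle (by positivity)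
    have h00 : v 0 = 0 := by nlinarith [sq_nonneg (v 0), sq_nonneg (v 1), sq_nonneg (v 2)]
    have h01 : v 1 = 0 := by nlinarith [sq_nonneg (v 0), sq_nonneg (v 1), sq_nonneg (v 2)]
    have h02 : v 2 = 0 := by nlinarith [sq_nonneg (v 0), sq_nonneg (v 1), sq_nonneg (v 2)]
    have h3 : v 3 ^ 2 = 1 := by have := sum_sq_S3 x; nlinarith
    have h3' : v 3 = 1 ∨ v 3 = -1 := mul_self_eq_one_iff.mp (by nlinarith)
    apply hx
    rcases h3' with h3' | h3'
    · left
      apply Subtype.ext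
      ext i
      fin_cases i <;>
        simp_all [northS3, EuclideanSpace.single_apply, v]
    · right
      apply Subtype.ext
      ext i
      fin_cases i <;>
        simp_all [southS3, EuclideanSpace.single_apply, v]
  · intro hpos
    intro hx
    have : v 0 ^ 2 + v 1 ^ 2 + v 2 ^ 2 = 0 := by
      rcases hx with rfl | rfl <;>
        simp [northS3, southS3, v, EuclideanSpace.single_apply]
    linarith

noncomputable def phi (p : S2 × ℝ) : S3 :=
  ⟨(WithLp.toLp 2 (fun i => (![(p.1 : EuclideanSpace ℝ (Fin 3)) 0, (p.1 : EuclideanSpace ℝ (Fin 3)) 1,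
      (p.1 : EuclideanSpace ℝ (Fin 3)) 2, p.2] i) / Real.sqrt (1 + p.2 ^ 2)) :
      EuclideanSpace ℝ (Fin 4)), by
    have hq : (0:ℝ) < 1 + p.2 ^ 2 := by positivity
    have hqs : Real.sqrt (1 + p.2 ^ 2) ^ 2 = 1 + p.2 ^ 2 := Real.sq_sqrt hq.le
    have hqpos : 0 < Real.sqrt (1 + p.2 ^ 2) := Real.sqrt_pos.mpr hq
    have hu := sum_sq_S2 p.1
    rw [mem_sphere_zero_iff_norm, EuclideanSpace.norm_eq]
    rw [Fin.sum_univ_four]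
    refine Real.sqrt_eq_one.mpr ?_
    simp only [Real.norm_eq_abs, sq_abs]
    simp only [Matrix.cons_val_zero, Matrix.cons_val_one, Matrix.head_cons,
      Matrix.cons_val_two, Matrix.tail_cons, Matrix.cons_val_three]
    field_simp
    nlinarith [hqs, hu]⟩

lemma phi_coe (p : S2 × ℝ) (i : Fin 4) :
    (phi p : EuclideanSpace ℝ (Fin 4)) i =
      (![(p.1 : EuclideanSpace ℝ (Fin 3)) 0, (p.1 : EuclideanSpace ℝ (Fin 3)) 1,
        (p.1 : EuclideanSpace ℝ (Fin 3)) 2, p.2] i) / Real.sqrt (1 + p.2 ^ 2) := rfl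

lemma continuous_phi : Continuous phi := by
  apply Continuous.subtype_mk
  apply (PiLp.continuous_toLp 2 _).comp
  apply continuous_pi
  intro i
  apply Continuous.div
  · fin_cases i <;> simp <;>
      first
      | exact continuous_snd
      | exact (PiLp.continuous_apply 2 _ 0).comp (continuous_subtype_val.comp continuous_fst)
      | exact (PiLp.continuous_apply 2 _ 1).comp (continuous_subtype_val.comp continuous_fst)
      | exact (PiLp.continuous_apply 2 _ 2).comp (continuous_subtype_val.comp continuous_fst)
  · exact (continuous_const.add ((continuous_snd).pow 2)).sqrt
  · intro p
    positivity

noncomputable def n3 (x : S3) : ℝ :=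
  Real.sqrt ((x : EuclideanSpace ℝ (Fin 4)) 0 ^ 2 + (x : EuclideanSpace ℝ (Fin 4)) 1 ^ 2
    + (x : EuclideanSpace ℝ (Fin 4)) 2 ^ 2)

lemma n3_pos {x : S3} (hx : x ∈ Aset) : 0 < n3 x :=
  Real.sqrt_pos.mpr ((mem_Aset_iff x).mp hx)

lemma n3_sq {x : S3} : n3 x ^ 2 = (x : EuclideanSpace ℝ (Fin 4)) 0 ^ 2
    + (x : EuclideanSpace ℝ (Fin 4)) 1 ^ 2 + (x : EuclideanSpace ℝ (Fin 4)) 2 ^ 2 :=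
  Real.sq_sqrt (by positivity)

noncomputable def psi (x : ↥Aset) : S2 × ℝ :=
  (⟨(WithLp.toLp 2 (fun i => (![(x.1 : EuclideanSpace ℝ (Fin 4)) 0, (x.1 : EuclideanSpace ℝ (Fin 4)) 1,
      (x.1 : EuclideanSpace ℝ (Fin 4)) 2] i) / n3 x.1) : EuclideanSpace ℝ (Fin 3)), by
    have hn := n3_pos x.2
    have hns := n3_sq (x := x.1)
    rw [mem_sphere_zero_iff_norm, EuclideanSpace.norm_eq, Fin.sum_univ_three]
    refine Real.sqrt_eq_one.mpr ?_
    simp only [Real.norm_eq_abs, sq_abs]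
    simp only [Matrix.cons_val_zero, Matrix.cons_val_one, Matrix.head_cons,
      Matrix.cons_val_two, Matrix.tail_cons]
    field_simp
    nlinarith [hns]⟩, (x.1 : EuclideanSpace ℝ (Fin 4)) 3 / n3 x.1)

lemma continuous_n3 : Continuous fun x : S3 => n3 x := by
  apply Real.continuous_sqrt.comp
  have h : ∀ i : Fin 4, Continuous fun x : S3 => (x : EuclideanSpace ℝ (Fin 4)) i :=
    fun i => (PiLp.continuous_apply 2 _ i).comp continuous_subtype_val
  exact (((h 0).pow 2).add ((h 1).pow 2)).add ((h 2).pow 2)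

lemma continuous_psi : Continuous psi := by
  have hc : Continuous fun x : ↥Aset => n3 x.1 :=
    continuous_n3.comp continuous_subtype_val
  have hne : ∀ x : ↥Aset, n3 x.1 ≠ 0 := fun x => (n3_pos x.2).ne'
  apply Continuous.prodMk
  · apply Continuous.subtype_mk
    apply (PiLp.continuous_toLp 2 _).comp
    apply continuous_pi
    intro i
    apply Continuous.div _ hc hne
    fin_cases i <;> simp <;>
      first
      | exact (PiLp.continuous_apply 2 _ 0).comp (continuous_subtype_val.comp continuous_subtype_val)
      | exact (PiLp.continuous_apply 2 _ 1).comp (continuous_subtype_val.comp continuous_subtype_val)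
      | exact (PiLp.continuous_apply 2 _ 2).comp (continuous_subtype_val.comp continuous_subtype_val)
  · exact Continuous.div
      ((PiLp.continuous_apply 2 _ _).comp (continuous_subtype_val.comp continuous_subtype_val)) hc hne

lemma phi_mem_Aset (p : S2 × ℝ) : phi p ∈ Aset := by
  rw [mem_Aset_iff]
  have hq : (0:ℝ) < 1 + p.2 ^ 2 := by positivity
  have hqs : Real.sqrt (1 + p.2 ^ 2) ^ 2 = 1 + p.2 ^ 2 := Real.sq_sqrt hq.le
  have hqpos : 0 < Real.sqrt (1 + p.2 ^ 2) := Real.sqrt_pos.mpr hq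
  have hu := sum_sq_S2 p.1
  simp only [phi_coe, Matrix.cons_val_zero, Matrix.cons_val_one, Matrix.head_cons,
    Matrix.cons_val_two, Matrix.tail_cons]
  rw [div_pow, div_pow, div_pow]
  rw [← add_div, ← add_div, hqs]
  positivity

lemma n3_phi (p : S2 × ℝ) : n3 (phi p) = (Real.sqrt (1 + p.2 ^ 2))⁻¹ := by
  have hq : (0:ℝ) < 1 + p.2 ^ 2 := by positivity
  have hqs : Real.sqrt (1 + p.2 ^ 2) ^ 2 = 1 + p.2 ^ 2 := Real.sq_sqrt hq.le
  have hqpos : 0 < Real.sqrt (1 + p.2 ^ 2) := Real.sqrt_pos.mpr hq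
  have hu := sum_sq_S2 p.1
  unfold n3
  simp only [phi_coe, Matrix.cons_val_zero, Matrix.cons_val_one, Matrix.head_cons,
    Matrix.cons_val_two, Matrix.tail_cons]
  rw [div_pow, div_pow, div_pow, ← add_div, ← add_div, hqs, hu]
  rw [one_div, Real.sqrt_inv]

lemma psi_phi (p : S2 × ℝ) : psi ⟨phi p, phi_mem_Aset p⟩ = p := by
  have hq : (0:ℝ) < 1 + p.2 ^ 2 := by positivity
  have hqpos : 0 < Real.sqrt (1 + p.2 ^ 2) := Real.sqrt_pos.mpr hq
  have hn := n3_phi p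
  apply Prod.ext
  · apply Subtype.ext
    ext i
    show _ / n3 (phi p) = _
    rw [hn]
    fin_cases i <;>
      · simp only [phi_coe, Matrix.cons_val_zero, Matrix.cons_val_one, Matrix.head_cons,
          Matrix.cons_val_two, Matrix.tail_cons, Fin.zero_eta, Fin.mk_one, Fin.reduceFinMk]
        field_simp
        try exact congrArg _ (Fin.ext (by first | rfl | simp | decide))
  · show (phi p : EuclideanSpace ℝ (Fin 4)) 3 / n3 (phi p) = p.2
    rw [hn]
    simp only [phi_coe, Matrix.cons_val_three, Matrix.head_cons, Matrix.tail_cons,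
      Matrix.cons_val_zero, Matrix.cons_val_one, Matrix.cons_val_two]
    field_simp

lemma n3_sq_add (x : S3) : n3 x ^ 2 + (x : EuclideanSpace ℝ (Fin 4)) 3 ^ 2 = 1 := by
  rw [n3_sq]
  have := sum_sq_S3 x
  linarith

lemma phi_psi (x : ↥Aset) : phi (psi x) = x.1 := by
  have hn := n3_pos x.2
  have hs : (1 : ℝ) + ((x.1 : EuclideanSpace ℝ (Fin 4)) 3 / n3 x.1) ^ 2 = (n3 x.1)⁻¹ ^ 2 := by
    have := n3_sq_add x.1
    field_simp
    nlinarith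
  have hsq : Real.sqrt (1 + ((x.1 : EuclideanSpace ℝ (Fin 4)) 3 / n3 x.1) ^ 2) = (n3 x.1)⁻¹ := by
    rw [hs, Real.sqrt_sq (by positivity)]
  apply Subtype.ext
  ext i
  rw [phi_coe]
  show (![_, _, _, _] i) / Real.sqrt (1 + ((x.1 : EuclideanSpace ℝ (Fin 4)) 3 / n3 x.1) ^ 2) = _
  rw [hsq]
  fin_cases i <;>
    · show _ / n3 x.1 / (n3 x.1)⁻¹ = _
      simp only [Matrix.cons_val_zero, Matrix.cons_val_one, Matrix.head_cons,
        Matrix.cons_val_two, Matrix.tail_cons]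
      field_simp
      try exact congrArg _ (Fin.ext (by first | rfl | simp | decide))

lemma sphereInv_phi (u : S2) (s : ℝ) : sphereInv (phi (u, s)) = phi (negS2 u, s) := by
  apply Subtype.ext
  ext i
  rw [sphereInv_coe]
  fin_cases i <;> simp [phi_coe, negS2, neg_div]

lemma t_inj {s s' : ℝ} (h : s / Real.sqrt (1 + s ^ 2) = s' / Real.sqrt (1 + s' ^ 2)) :
    s = s' := by
  have hq : (0:ℝ) < 1 + s ^ 2 := by positivity
  have hq' : (0:ℝ) < 1 + s' ^ 2 := by positivity
  set q := Real.sqrt (1 + s ^ 2) with hqdef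
  set q' := Real.sqrt (1 + s' ^ 2) with hq'def
  have hqpos : 0 < q := Real.sqrt_pos.mpr hq
  have hq'pos : 0 < q' := Real.sqrt_pos.mpr hq'
  have hq2 : q ^ 2 = 1 + s ^ 2 := Real.sq_sqrt hq.le
  have hq'2 : q' ^ 2 = 1 + s' ^ 2 := Real.sq_sqrt hq'.le
  have h1 : s * q' = s' * q := by
    field_simp at h
    linarith
  have h2 : (s * q') ^ 2 = (s' * q) ^ 2 := by rw [h1]
  have h3 : s ^ 2 = s' ^ 2 := by nlinarith
  rcases mul_eq_zero.mp (show (s - s') * (s + s') = 0 by nlinarith) with h4 | h4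
  · linarith
  · have hs' : s' = -s := by linarith
    have hqq : q' = q := by rw [hq'def, hqdef, hs']; ring_nf
    rw [hs', hqq] at h1
    have : s = 0 := by nlinarith
    rw [this] at hs'
    rw [this, hs', neg_zero]

abbrev Tset : Set XS := {Quot.mk _ northS3, Quot.mk _ southS3}ᶜ

lemma mk_mem_Tset {x : S3} (hx : x ∈ Aset) : Quot.mk _ x ∈ Tset := by
  intro h
  rcases h with h | h
  · rcases mkS3_eq.mp h with rfl | h'
    · exact hx (Or.inl rfl)
    · have : x = northS3 := by
        have := congrArg sphereInv h'
        rwa [sphereInv_inv, sphereInv_north] at this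
      exact hx (Or.inl this)
  · rcases mkS3_eq.mp h with rfl | h'
    · exact hx (Or.inr rfl)
    · have : x = southS3 := by
        have := congrArg sphereInv h'
        rwa [sphereInv_inv, sphereInv_south] at this
      exact hx (Or.inr this)

lemma mem_Aset_of_mk_mem {x : S3} (hx : Quot.mk _ x ∈ Tset) : x ∈ Aset := by
  intro h
  apply hx
  rcases h with rfl | rfl
  · exact Or.inl rfl
  · exact Or.inr rfl

noncomputable def g0 (p : S2 × ℝ) : ↥Tset :=
  ⟨Quot.mk _ (phi p), mk_mem_Tset (phi_mem_Aset p)⟩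

lemma continuous_g0 : Continuous g0 :=
  (continuous_quot_mk.comp continuous_phi).subtype_mk _

noncomputable def G (z : RP2 × ℝ) : ↥Tset :=
  (Quot.lift (fun u : S2 => fun s : ℝ => g0 (u, s)) (by
    intro u u' huu'
    funext s
    apply Subtype.ext
    show (Quot.mk _ (phi (u, s)) : XS) = Quot.mk _ (phi (u', s))
    apply Quot.sound
    show sphereInv (phi (u, s)) = phi (u', s)
    rw [sphereInv_phi]
    congr 1
    apply Prod.ext
    · exact Subtype.ext (by simp [negS2, huu'])
    · rfl) z.1) z.2

lemma continuous_negS2 : Continuous negS2 :=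
  (continuous_subtype_val.neg).subtype_mk _

lemma negS2_preim {U : Set S2} (x : S2) :
    Quot.mk _ x ∈ (Quot.mk (fun x y : S2 => (y : EuclideanSpace ℝ (Fin 3)) = -(x : EuclideanSpace ℝ (Fin 3))) '' U) ↔ x ∈ U ∨ negS2 x ∈ U := by
  constructor
  · rintro ⟨u, hu, hmk⟩
    rcases mkS2_eq.mp hmk with rfl | h
    · exact Or.inl hu
    · right
      have : negS2 x = u := by
        apply Subtype.ext
        show -(x : EuclideanSpace ℝ (Fin 3)) = u
        rw [h, neg_neg]
      rwa [this]
  · rintro (h | h)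
    · exact ⟨x, h, rfl⟩
    · exact ⟨negS2 x, h, mkS2_eq.mpr (Or.inr (by simp [negS2]))⟩

lemma isOpenMap_q2 : IsOpenMap (Quot.mk (fun x y : S2 => (y : EuclideanSpace ℝ (Fin 3)) = -(x : EuclideanSpace ℝ (Fin 3)))) := by
  intro U hU
  rw [← isQuotientMap_quot_mk.isOpen_preimage]
  have : Quot.mk (fun x y : S2 => (y : EuclideanSpace ℝ (Fin 3)) = -(x : EuclideanSpace ℝ (Fin 3))) ⁻¹' (Quot.mk (fun x y : S2 => (y : EuclideanSpace ℝ (Fin 3)) = -(x : EuclideanSpace ℝ (Fin 3))) '' U) = U ∪ negS2 ⁻¹' U := by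
    ext x
    simpa using negS2_preim x
  rw [this]
  exact hU.union (hU.preimage continuous_negS2)

lemma isQuotientMap_q2id :
    Topology.IsQuotientMap (Prod.map (Quot.mk (fun x y : S2 => (y : EuclideanSpace ℝ (Fin 3)) = -(x : EuclideanSpace ℝ (Fin 3)))) (id : ℝ → ℝ)) := by
  apply IsOpenMap.isQuotientMap
  · exact isOpenMap_q2.prodMap IsOpenMap.id
  · exact (continuous_quot_mk.prodMap continuous_id)
  · exact (Quot.mk_surjective).prodMap Function.surjective_id

lemma continuous_G : Continuous G := by
  rw [isQuotientMap_q2id.continuous_iff]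
  exact continuous_g0

lemma phi_inj {p p' : S2 × ℝ} (h : phi p = phi p') : p = p' := by
  obtain ⟨u, s⟩ := p
  obtain ⟨u', s'⟩ := p'
  have hc : ∀ j : Fin 4, (phi (u, s) : EuclideanSpace ℝ (Fin 4)) j
      = (phi (u', s') : EuclideanSpace ℝ (Fin 4)) j :=
    fun j => by rw [h]
  have h4 := hc 3
  simp only [phi_coe, Matrix.cons_val_three, Matrix.head_cons, Matrix.tail_cons,
    Matrix.cons_val_zero, Matrix.cons_val_one, Matrix.cons_val_two] at h4
  have hs : s = s' := t_inj h4
  subst hs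
  have hq : Real.sqrt (1 + s ^ 2) ≠ 0 := (Real.sqrt_pos.mpr (by positivity)).ne'
  simp only [Prod.mk.injEq]
  refine ⟨?_, trivial⟩
  apply Subtype.ext
  ext i
  fin_cases i
  · have h0 := hc 0
    simp only [phi_coe, Matrix.cons_val_zero] at h0
    field_simp at h0
    exact h0
  · have h0 := hc 1
    simp only [phi_coe, Matrix.cons_val_one, Matrix.head_cons] at h0
    field_simp at h0
    exact h0
  · have h0 := hc 2
    simp only [phi_coe, Matrix.cons_val_two, Matrix.tail_cons, Matrix.head_cons] at h0
    field_simp at h0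
    exact h0

lemma G_inj : Function.Injective G := by
  rintro ⟨p, s⟩ ⟨p', s'⟩ h
  induction p using Quot.ind with
  | _ u =>
  induction p' using Quot.ind with
  | _ u' =>
  have h' : (Quot.mk _ (phi (u, s)) : XS) = Quot.mk _ (phi (u', s')) :=
    congrArg Subtype.val h
  rcases mkS3_eq.mp h' with h2 | h2
  · obtain ⟨h3, h4⟩ := Prod.mk.inj (phi_inj h2)
    rw [h3, h4]
  · rw [sphereInv_phi] at h2
    obtain ⟨h3, h4⟩ := Prod.mk.inj (phi_inj h2)
    have : (Quot.mk _ u : RP2) = Quot.mk _ u' := by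
      apply Quot.sound
      show (u' : EuclideanSpace ℝ (Fin 3)) = -(u : EuclideanSpace ℝ (Fin 3))
      rw [← h3]
      rfl
    rw [this, h4]

lemma G_surj : Function.Surjective G := by
  rintro ⟨z, hz⟩
  induction z using Quot.ind with
  | _ x =>
  have hx : x ∈ Aset := mem_Aset_of_mk_mem hz
  refine ⟨(Quot.mk _ (psi ⟨x, hx⟩).1, (psi ⟨x, hx⟩).2), ?_⟩
  apply Subtype.ext
  show (Quot.mk _ (phi ((psi ⟨x, hx⟩).1, (psi ⟨x, hx⟩).2)) : XS) = Quot.mk _ x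
  have : ((psi ⟨x, hx⟩).1, (psi ⟨x, hx⟩).2) = psi ⟨x, hx⟩ := rfl
  rw [this, phi_psi]

lemma phi_image (V : Set (S2 × ℝ)) : phi '' V = Subtype.val '' (psi ⁻¹' V) := by
  ext y
  constructor
  · rintro ⟨p, hp, rfl⟩
    refine ⟨⟨phi p, phi_mem_Aset p⟩, ?_, rfl⟩
    show psi ⟨phi p, phi_mem_Aset p⟩ ∈ V
    rw [psi_phi]
    exact hp
  · rintro ⟨x, hx, rfl⟩
    exact ⟨psi x, hx, phi_psi x⟩

lemma isOpenMap_q3 : IsOpenMap (Quot.mk (fun p q : S3 => sphereInv p = q)) := by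
  intro U hU
  rw [← isQuotientMap_quot_mk.isOpen_preimage]
  have : Quot.mk (fun p q : S3 => sphereInv p = q) ⁻¹'
      (Quot.mk (fun p q : S3 => sphereInv p = q) '' U) = U ∪ sphereInv ⁻¹' U := by
    ext x
    constructor
    · rintro ⟨u, hu, hmk⟩
      rcases mkS3_eq.mp hmk with rfl | hinv
      · exact Or.inl hu
      · right
        show sphereInv x ∈ U
        have : sphereInv x = u := by rw [← hinv, sphereInv_inv]
        rwa [this]
    · rintro (hmem | hmem)
      · exact ⟨x, hmem, rfl⟩
      · exact ⟨sphereInv x, hmem, mkS3_eq.mpr (Or.inr (sphereInv_inv x))⟩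
  rw [this]
  exact hU.union (hU.preimage continuous_sphereInv)

lemma isOpenMap_g0 : IsOpenMap g0 := by
  intro V hV
  have himg : g0 '' V = Subtype.val ⁻¹'
      (Quot.mk (fun p q : S3 => sphereInv p = q) '' (phi '' V)) := by
    ext w
    constructor
    · rintro ⟨p, hp, rfl⟩
      exact ⟨phi p, ⟨p, hp, rfl⟩, rfl⟩
    · rintro ⟨y, ⟨p, hp, rfl⟩, hw⟩
      exact ⟨p, hp, Subtype.ext hw⟩
  rw [himg]
  refine IsOpen.preimage continuous_subtype_val ?_
  apply isOpenMap_q3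
  rw [phi_image]
  exact isOpen_Aset.isOpenMap_subtype_val _ (hV.preimage continuous_psi)

lemma isOpenMap_G : IsOpenMap G := by
  intro W hW
  have himg : G '' W = g0 '' (Prod.map
      (Quot.mk (fun x y : S2 => (y : EuclideanSpace ℝ (Fin 3)) = -(x : EuclideanSpace ℝ (Fin 3))))
      (id : ℝ → ℝ) ⁻¹' W) := by
    ext w
    constructor
    · rintro ⟨z, hz, rfl⟩
      obtain ⟨p, rfl⟩ := isQuotientMap_q2id.surjective z
      exact ⟨p, hz, rfl⟩
    · rintro ⟨p, hp, rfl⟩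
      exact ⟨Prod.map (Quot.mk _) id p, hp, rfl⟩
  rw [himg]
  exact isOpenMap_g0 _ (hW.preimage (continuous_quot_mk.prodMap continuous_id))

noncomputable def bigHomeo : ↥Tset ≃ₜ RP2 × ℝ :=
  (Equiv.toHomeomorphOfContinuousOpen (Equiv.ofBijective G ⟨G_inj, G_surj⟩)
    continuous_G isOpenMap_G).symm

/-- The complement in `X_S` of the images of the two fixed points `(0,0,0,±1)` of `ι`,
with the subspace topology, is homeomorphic to `ℝP² × ℝ`. -/
theorem XS_minus_singular_points_homeomorphic :
    Nonempty ((({Quot.mk _ northS3, Quot.mk _ southS3}ᶜ : Set XS)) ≃ₜ RP2 × ℝ) := by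
  exact ⟨bigHomeo⟩
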